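/- arXiv:0805.1077 — 2 statements merged into one kernel-verified Lean document; each statement's English description precedes it below -/
import Mathlib

section
/- Let A be an admissible pseudo-Hermitian n×n matrix with eigenvalues λ_p ≥ … ≥ λ_1 > μ_1 ≥ … ≥ μ_q. Then μ_1 = max_{x ∈ ℂⁿ₋} R_A(x); precisely: for every x ∈ ℂⁿ₋ one has R_A(x) ≤ μ_1, and there exists x ∈ ℂⁿ₋ with R_A(x) = μ_1. -/
open Matrix

/-- The signature matrix `J = diag(1,…,1,−1,…,−1)` with `p` ones and `q` minus-ones. -/
noncomputable def Jmat (p q : ℕ) : Matrix (Fin (p + q)) (Fin (p + q)) ℂ :=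
  Matrix.diagonal (fun i => if (i : ℕ) < p then 1 else -1)

/-- The indefinite pairing `⟨z,w⟩ = Σ_{i<p} z_i conj(w_i) − Σ_{i≥p} z_i conj(w_i)`;
equivalently `w† · z` where `x† = (J conj(x))ᵀ`. -/
noncomputable def pairing (p q : ℕ) (z w : Fin (p + q) → ℂ) : ℂ :=
  ∑ i : Fin (p + q),
    (if (i : ℕ) < p then z i * (starRingEnd ℂ) (w i) else -(z i * (starRingEnd ℂ) (w i)))

/-- The diagonal entries of `Λ = diag(λ_p, …, λ_1, μ_1, …, μ_q)`, where `lam` and `mu`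
are 0-indexed: `lam i = λ_{i+1}` and `mu j = μ_{j+1}`. -/
noncomputable def diagEntries (p q : ℕ) (lam : Fin p → ℝ) (mu : Fin q → ℝ) :
    Fin (p + q) → ℂ :=
  fun i =>
    if h : (i : ℕ) < p then ((lam ⟨p - 1 - (i : ℕ), by omega⟩ : ℝ) : ℂ)
    else ((mu ⟨(i : ℕ) - p, by have := i.isLt; omega⟩ : ℝ) : ℂ)

/-- `A` is an admissible pseudo-Hermitian matrix with (real) eigenvalues
`λ_p ≥ … ≥ λ_1 > μ_1 ≥ … ≥ μ_q`, recorded 0-indexed as `lam i = λ_{i+1}` (so `lam` is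
monotone) and `mu j = μ_{j+1}` (so `mu` is antitone), with `λ_1 > μ_1`, and
`A = U Λ U⁻¹` for some invertible `U` with `U J Uᴴ = J`. -/
def IsAdmissible (p q : ℕ) (hp : 0 < p) (hq : 0 < q)
    (A : Matrix (Fin (p + q)) (Fin (p + q)) ℂ)
    (lam : Fin p → ℝ) (mu : Fin q → ℝ) : Prop :=
  A * Jmat p q = Jmat p q * A.conjTranspose ∧
  Monotone lam ∧ Antitone mu ∧ mu ⟨0, hq⟩ < lam ⟨0, hp⟩ ∧
  ∃ U : Matrix (Fin (p + q)) (Fin (p + q)) ℂ,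
    IsUnit U ∧ U * Jmat p q * U.conjTranspose = Jmat p q ∧
    A = U * Matrix.diagonal (diagEntries p q lam mu) * U⁻¹

/-- The Rayleigh ratio `R_A(x) = (x† A x)/(x† x)`, as a real number (for admissible
pseudo-Hermitian `A` both `x† A x` and `x† x` are real). -/
noncomputable def rayleigh (p q : ℕ) (A : Matrix (Fin (p + q)) (Fin (p + q)) ℂ)
    (x : Fin (p + q) → ℂ) : ℝ :=
  (pairing p q (A.mulVec x) x).re / (pairing p q x x).re

lemma pairing_eq (p q : ℕ) (z w : Fin (p+q) → ℂ) :
    pairing p q z w = star w ⬝ᵥ ((Jmat p q) *ᵥ z) := by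
  unfold pairing Jmat
  simp only [dotProduct, mulVec_diagonal, Pi.star_apply]
  refine Finset.sum_congr rfl fun i _ => ?_
  by_cases h : (i:ℕ) < p <;> simp [h, Complex.star_def] <;> ring

lemma JJ (p q : ℕ) : Jmat p q * Jmat p q = 1 := by
  unfold Jmat
  rw [Matrix.diagonal_mul_diagonal]
  have : ((fun i : Fin (p+q) => (if (i:ℕ) < p then (1:ℂ) else -1) * (if (i:ℕ) < p then (1:ℂ) else -1))) = fun _ => (1:ℂ) := by
    ext i; by_cases h : (i:ℕ) < p <;> simp [h]
  rw [this, Matrix.diagonal_one]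

lemma conjT_J (p q : ℕ) (U : Matrix (Fin (p+q)) (Fin (p+q)) ℂ) (hUu : IsUnit U)
    (hUJ : U * Jmat p q * U.conjTranspose = Jmat p q) :
    U.conjTranspose * Jmat p q * U = Jmat p q := by
  have hd : IsUnit U.det := (Matrix.isUnit_iff_isUnit_det U).mp hUu
  have h1 : Jmat p q * U.conjTranspose = U⁻¹ * Jmat p q := by
    calc Jmat p q * U.conjTranspose
        = (U⁻¹ * U) * (Jmat p q * U.conjTranspose) := by
          rw [Matrix.nonsing_inv_mul U hd, Matrix.one_mul]
      _ = U⁻¹ * (U * Jmat p q * U.conjTranspose) := by simp only [Matrix.mul_assoc]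
      _ = U⁻¹ * Jmat p q := by rw [hUJ]
  have h2 : U.conjTranspose = Jmat p q * U⁻¹ * Jmat p q := by
    calc U.conjTranspose = (Jmat p q * Jmat p q) * U.conjTranspose := by
          rw [JJ, Matrix.one_mul]
      _ = Jmat p q * (Jmat p q * U.conjTranspose) := by rw [Matrix.mul_assoc]
      _ = Jmat p q * (U⁻¹ * Jmat p q) := by rw [h1]
      _ = Jmat p q * U⁻¹ * Jmat p q := by rw [Matrix.mul_assoc]
  calc U.conjTranspose * Jmat p q * U
      = Jmat p q * U⁻¹ * (Jmat p q * Jmat p q) * U := by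
        rw [h2]; simp only [Matrix.mul_assoc]
    _ = Jmat p q * (U⁻¹ * U) := by rw [JJ]; simp only [Matrix.mul_assoc, Matrix.mul_one, Matrix.one_mul]
    _ = Jmat p q := by rw [Matrix.nonsing_inv_mul U hd, Matrix.mul_one]

lemma pairing_mulVec (p q : ℕ) (U : Matrix (Fin (p+q)) (Fin (p+q)) ℂ)
    (hU : U.conjTranspose * Jmat p q * U = Jmat p q)
    (y y' : Fin (p+q) → ℂ) :
    pairing p q (U *ᵥ y) (U *ᵥ y') = pairing p q y y' := by
  rw [pairing_eq, pairing_eq, mulVec_mulVec, star_mulVec,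
     dotProduct_mulVec, vecMul_vecMul, ← Matrix.mul_assoc, hU, ← dotProduct_mulVec]

lemma pairing_diag_re (p q : ℕ) (lam : Fin p → ℝ) (mu : Fin q → ℝ) (y : Fin (p+q) → ℂ) :
    (pairing p q ((Matrix.diagonal (diagEntries p q lam mu)) *ᵥ y) y).re
      = ∑ i : Fin (p+q), (if h : (i:ℕ) < p then lam ⟨p - 1 - (i:ℕ), by omega⟩
          else -(mu ⟨(i:ℕ) - p, by have := i.isLt; omega⟩)) * Complex.normSq (y i) := by
  unfold pairing
  rw [Complex.re_sum]
  refine Finset.sum_congr rfl fun i _ => ?_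
  rw [mulVec_diagonal]
  unfold diagEntries
  by_cases h : (i:ℕ) < p
  · simp only [h, if_true, dif_pos h]
    rw [mul_assoc, Complex.mul_conj]
    simp
  · simp only [h, if_false, dif_neg h]
    rw [mul_assoc, Complex.mul_conj]
    simp

lemma pairing_self_re (p q : ℕ) (y : Fin (p+q) → ℂ) :
    (pairing p q y y).re
      = ∑ i : Fin (p+q), (if (i:ℕ) < p then (1:ℝ) else -1) * Complex.normSq (y i) := by
  unfold pairing
  rw [Complex.re_sum]
  refine Finset.sum_congr rfl fun i _ => ?_
  by_cases h : (i:ℕ) < p <;> simp [h, Complex.mul_conj]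

lemma key_ineq (p q : ℕ) (hp : 0 < p) (hq : 0 < q) (lam : Fin p → ℝ) (mu : Fin q → ℝ)
    (hlam : Monotone lam) (hmu : Antitone mu) (hlt : mu ⟨0,hq⟩ < lam ⟨0,hp⟩)
    (y : Fin (p+q) → ℂ) (hy : (pairing p q y y).re < 0) :
    (pairing p q ((Matrix.diagonal (diagEntries p q lam mu)) *ᵥ y) y).re
      / (pairing p q y y).re ≤ mu ⟨0,hq⟩ := by
  rw [div_le_iff_of_neg hy, pairing_diag_re, pairing_self_re, Finset.mul_sum]
  refine Finset.sum_le_sum fun i _ => ?_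
  have hn : (0:ℝ) ≤ Complex.normSq (y i) := Complex.normSq_nonneg _
  by_cases h : (i:ℕ) < p
  · rw [if_pos h, dif_pos h, one_mul]
    have : mu ⟨0,hq⟩ ≤ lam ⟨p - 1 - (i:ℕ), by omega⟩ :=
      le_of_lt (lt_of_lt_of_le hlt (hlam (by exact Fin.mk_le_mk.mpr (Nat.zero_le _))))
    nlinarith
  · rw [if_neg h, dif_neg h]
    have : mu ⟨(i:ℕ) - p, by have := i.isLt; omega⟩ ≤ mu ⟨0,hq⟩ :=
      hmu (Fin.mk_le_mk.mpr (Nat.zero_le _))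
    nlinarith

/-- for admissible pseudo-Hermitian `A`,
`μ_1 = max_{x ∈ ℂⁿ₋} R_A(x)`. -/
theorem mu_one_is_max_of_rayleigh_on_neg_cone
    (p q : ℕ) (hp : 0 < p) (hq : 0 < q)
    (A : Matrix (Fin (p + q)) (Fin (p + q)) ℂ)
    (lam : Fin p → ℝ) (mu : Fin q → ℝ)
    (hA : IsAdmissible p q hp hq A lam mu) :
    (∀ x : Fin (p + q) → ℂ, (pairing p q x x).re < 0 →
        rayleigh p q A x ≤ mu ⟨0, hq⟩) ∧
    (∃ x : Fin (p + q) → ℂ, (pairing p q x x).re < 0 ∧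
        rayleigh p q A x = mu ⟨0, hq⟩) := by
  obtain ⟨hpH, hlam, hmu, hlt, U, hUu, hUJ, hAeq⟩ := hA
  have hd : IsUnit U.det := (Matrix.isUnit_iff_isUnit_det U).mp hUu
  have hU' := conjT_J p q U hUu hUJ
  have main : ∀ y : Fin (p+q) → ℂ,
      pairing p q (A *ᵥ (U *ᵥ y)) (U *ᵥ y) =
        pairing p q ((Matrix.diagonal (diagEntries p q lam mu)) *ᵥ y) y ∧
      pairing p q (U *ᵥ y) (U *ᵥ y) = pairing p q y y := by
    intro y
    constructor
    · have hAx : A *ᵥ (U *ᵥ y)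
          = U *ᵥ ((Matrix.diagonal (diagEntries p q lam mu)) *ᵥ y) := by
        rw [hAeq]
        rw [mulVec_mulVec, mulVec_mulVec, Matrix.mul_assoc, Matrix.mul_assoc,
          Matrix.nonsing_inv_mul U hd, Matrix.mul_one]
      rw [hAx, pairing_mulVec p q U hU']
    · exact pairing_mulVec p q U hU' y y
  constructor
  · intro x hx
    set y := U⁻¹ *ᵥ x with hydef
    have hxy : x = U *ᵥ y := by
      rw [hydef, mulVec_mulVec, Matrix.mul_nonsing_inv U hd, one_mulVec]
    obtain ⟨h1, h2⟩ := main y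
    rw [← hxy] at h1 h2
    unfold rayleigh
    rw [h1, h2]
    exact key_ineq p q hp hq lam mu hlam hmu hlt y (h2 ▸ hx)
  · set k : Fin (p+q) := ⟨p, by omega⟩ with hk
    set y : Fin (p+q) → ℂ := fun i => if i = k then 1 else 0 with hy
    have hknp : ¬ ((k:ℕ) < p) := by simp [hk]
    have hself : pairing p q y y = -1 := by
      unfold pairing
      rw [Finset.sum_eq_single k]
      · simp [hy, hknp]
      · intro b _ hb
        simp [hy, hb]
      · simp
    have hdiag : pairing p q ((Matrix.diagonal (diagEntries p q lam mu)) *ᵥ y) y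
        = -(mu ⟨0, hq⟩ : ℂ) := by
      unfold pairing
      rw [Finset.sum_eq_single k]
      · rw [mulVec_diagonal]
        have : diagEntries p q lam mu k = ((mu ⟨0, hq⟩ : ℝ) : ℂ) := by
          unfold diagEntries
          rw [dif_neg hknp]
          congr 1
          simp [hk]
        rw [this]
        simp [hy, hknp]
      · intro b _ hb
        rw [mulVec_diagonal]
        simp [hy, hb]
      · simp
    refine ⟨U *ᵥ y, ?_, ?_⟩
    · rw [(main y).2, hself]; norm_num
    · unfold rayleigh
      rw [(main y).1, (main y).2, hself, hdiag]
      simp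
end

section
/- Let A be an admissible pseudo-Hermitian n×n matrix with eigenvalues λ_p ≥ … ≥ λ_1 > μ_1 ≥ … ≥ μ_q and pseudo-orthonormal eigenbasis v_1,…,v_p, w_1,…,w_q, and let V = span{v_1,…,v_p}. For each 1 ≤ k ≤ p, λ_k = max of R_A(x) over nonzero x ∈ V satisfying ⟨x, v_i⟩ = 0 for all k+1 ≤ i ≤ p; precisely: every such x lies in ℂⁿ₊ and satisfies R_A(x) ≤ λ_k, and equality holds for x = v_k. -/
open Matrix

/-- A pseudo-orthonormal eigenbasis `v_1, …, v_p, w_1, …, w_q` (0-indexed) of an admissible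
matrix `A`: a basis of `ℂⁿ` with `A v_i = λ_i v_i`, `A w_j = μ_j w_j`, `⟨v_i,v_i⟩ = 1`,
`⟨w_j,w_j⟩ = −1`, and all pairings of distinct basis vectors zero. -/
def IsPseudoONEigenbasis (p q : ℕ) (A : Matrix (Fin (p + q)) (Fin (p + q)) ℂ)
    (lam : Fin p → ℝ) (mu : Fin q → ℝ)
    (v : Fin p → Fin (p + q) → ℂ) (w : Fin q → Fin (p + q) → ℂ) : Prop :=
  LinearIndependent ℂ (Fin.append v w) ∧
  Submodule.span ℂ (Set.range (Fin.append v w)) = ⊤ ∧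
  (∀ i, A.mulVec (v i) = (lam i : ℂ) • v i) ∧
  (∀ j, A.mulVec (w j) = (mu j : ℂ) • w j) ∧
  (∀ i i', pairing p q (v i) (v i') = if i = i' then 1 else 0) ∧
  (∀ j j', pairing p q (w j) (w j') = if j = j' then -1 else 0) ∧
  (∀ i j, pairing p q (v i) (w j) = 0) ∧
  (∀ j i, pairing p q (w j) (v i) = 0)

lemma pairing_eq_s3 (p q : ℕ) (z w : Fin (p + q) → ℂ) :
    pairing p q z w = ∑ i : Fin (p + q),
      (if (i : ℕ) < p then (1:ℂ) else -1) * (z i * (starRingEnd ℂ) (w i)) := by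
  unfold pairing
  refine Finset.sum_congr rfl fun i _ => ?_
  split <;> ring

lemma pairing_sum_left (p q : ℕ) {ι : Type*} (s : Finset ι) (f : ι → Fin (p+q) → ℂ)
    (w : Fin (p + q) → ℂ) :
    pairing p q (∑ i ∈ s, f i) w = ∑ i ∈ s, pairing p q (f i) w := by
  simp only [pairing_eq_s3, Finset.sum_apply, Finset.sum_mul, Finset.mul_sum]
  rw [Finset.sum_comm]

lemma pairing_sum_right (p q : ℕ) {ι : Type*} (s : Finset ι) (f : ι → Fin (p+q) → ℂ)
    (z : Fin (p + q) → ℂ) :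
    pairing p q z (∑ i ∈ s, f i) = ∑ i ∈ s, pairing p q z (f i) := by
  simp only [pairing_eq_s3, Finset.sum_apply, map_sum, Finset.sum_mul, Finset.mul_sum]
  rw [Finset.sum_comm]

lemma pairing_smul_left (p q : ℕ) (c : ℂ) (z w : Fin (p + q) → ℂ) :
    pairing p q (c • z) w = c * pairing p q z w := by
  simp only [pairing_eq_s3, Pi.smul_apply, smul_eq_mul, Finset.mul_sum]
  refine Finset.sum_congr rfl fun i _ => by ring

lemma pairing_smul_right (p q : ℕ) (c : ℂ) (z w : Fin (p + q) → ℂ) :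
    pairing p q z (c • w) = (starRingEnd ℂ) c * pairing p q z w := by
  simp only [pairing_eq_s3, Pi.smul_apply, smul_eq_mul, _root_.map_mul, Finset.mul_sum]
  refine Finset.sum_congr rfl fun i _ => by ring

theorem aux_main
    (p q : ℕ) (hp : 0 < p) (hq : 0 < q)
    (A : Matrix (Fin (p + q)) (Fin (p + q)) ℂ)
    (lam : Fin p → ℝ)
    (hlam : Monotone lam)
    (v : Fin p → Fin (p + q) → ℂ)
    (hAv : ∀ i, A.mulVec (v i) = (lam i : ℂ) • v i)
    (hvv : ∀ i i', pairing p q (v i) (v i') = if i = i' then 1 else 0)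
    (k : ℕ) (hk1 : 1 ≤ k) (hk2 : k ≤ p) :
    (∀ x : Fin (p + q) → ℂ, x ∈ Submodule.span ℂ (Set.range v) → x ≠ 0 →
        (∀ i : Fin p, k ≤ (i : ℕ) → pairing p q x (v i) = 0) →
        0 < (pairing p q x x).re ∧ rayleigh p q A x ≤ lam ⟨k - 1, Nat.lt_of_lt_of_le (Nat.sub_lt hk1 Nat.one_pos) hk2⟩) ∧
    rayleigh p q A (v ⟨k - 1, Nat.lt_of_lt_of_le (Nat.sub_lt hk1 Nat.one_pos) hk2⟩) = lam ⟨k - 1, Nat.lt_of_lt_of_le (Nat.sub_lt hk1 Nat.one_pos) hk2⟩ := by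
  set K : Fin p := ⟨k - 1, Nat.lt_of_lt_of_le (Nat.sub_lt hk1 Nat.one_pos) hk2⟩ with hK
  constructor
  · intro x hx hx0 horth
    obtain ⟨c, hc⟩ := (Submodule.mem_span_range_iff_exists_fun ℂ).mp hx
    -- pairing x (v i) = c i
    have hxi : ∀ i : Fin p, pairing p q x (v i) = c i := by
      intro i
      rw [← hc, pairing_sum_left]
      simp only [pairing_smul_left, hvv]
      simp [Finset.sum_ite_eq']
    have hczero : ∀ i : Fin p, k ≤ (i : ℕ) → c i = 0 := by
      intro i hi; rw [← hxi i]; exact horth i hi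
    -- pairing x x
    have hxx : pairing p q x x = ∑ i : Fin p, (Complex.normSq (c i) : ℂ) := by
      conv_lhs => rw [← hc, pairing_sum_right]
      simp only [pairing_smul_right]
      refine Finset.sum_congr rfl fun i _ => ?_
      rw [hc, hxi i, mul_comm, Complex.mul_conj]
    have hxxre : (pairing p q x x).re = ∑ i : Fin p, Complex.normSq (c i) := by
      rw [hxx]; push_cast; simp
    have hcne : ∃ i, c i ≠ 0 := by
      by_contra h
      push_neg at h
      apply hx0
      rw [← hc]
      simp [h]
    obtain ⟨i0, hi0⟩ := hcne
    have hpos : 0 < (pairing p q x x).re := by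
      rw [hxxre]
      refine Finset.sum_pos' (fun i _ => Complex.normSq_nonneg _) ⟨i0, Finset.mem_univ _, ?_⟩
      exact Complex.normSq_pos.mpr hi0
    refine ⟨hpos, ?_⟩
    -- numerator
    have hAx : A.mulVec x = ∑ i : Fin p, (c i * (lam i : ℂ)) • v i := by
      rw [← hc]
      rw [show (∑ i : Fin p, c i • v i) = ∑ i : Fin p, (c i • v i) from rfl]
      rw [← Matrix.mulVecLin_apply, map_sum]
      refine Finset.sum_congr rfl fun i _ => ?_
      rw [_root_.map_smul, Matrix.mulVecLin_apply, hAv i, smul_smul, mul_comm]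
    have hvix : ∀ i : Fin p, pairing p q (v i) x = (starRingEnd ℂ) (c i) := by
      intro i
      conv_lhs => rw [← hc, pairing_sum_right]
      simp only [pairing_smul_right, hvv]
      simp [Finset.sum_ite_eq']
    have hnum : pairing p q (A.mulVec x) x = ∑ i : Fin p, ((lam i * Complex.normSq (c i) : ℝ) : ℂ) := by
      rw [hAx, pairing_sum_left]
      simp only [pairing_smul_left, hvix]
      refine Finset.sum_congr rfl fun i _ => ?_
      push_cast
      rw [← Complex.mul_conj]
      ring
    have hnumre : (pairing p q (A.mulVec x) x).re = ∑ i : Fin p, lam i * Complex.normSq (c i) := by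
      rw [hnum]; push_cast; simp
    have hbound : ∑ i : Fin p, lam i * Complex.normSq (c i)
        ≤ lam K * ∑ i : Fin p, Complex.normSq (c i) := by
      rw [Finset.mul_sum]
      refine Finset.sum_le_sum fun i _ => ?_
      by_cases hik : k ≤ (i : ℕ)
      · rw [hczero i hik]; simp
      · have : i ≤ K := by
          rw [Fin.le_def]; simp only [hK]; omega
        exact mul_le_mul_of_nonneg_right (hlam this) (Complex.normSq_nonneg _)
    rw [rayleigh, div_le_iff₀ hpos, hnumre, hxxre]
    exact hbound
  · -- equality at v K
    have h1 : pairing p q (v K) (v K) = 1 := by rw [hvv]; simp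
    have h2 : pairing p q (A.mulVec (v K)) (v K) = (lam K : ℂ) := by
      rw [hAv, pairing_smul_left, h1, mul_one]
    rw [rayleigh, h1, h2]
    simp

/-- `λ_k` is the maximum of `R_A(x)` over nonzero `x ∈ V = span{v_1,…,v_p}`
orthogonal to `v_{k+1}, …, v_p`; every such `x` lies in `ℂⁿ₊`, and the maximum is
attained at `v_k`.  (`k` is 1-indexed, `1 ≤ k ≤ p`.) -/
theorem lambda_k_max_orthogonal_to_higher_eigenvectors
    (p q : ℕ) (hp : 0 < p) (hq : 0 < q)
    (A : Matrix (Fin (p + q)) (Fin (p + q)) ℂ)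
    (lam : Fin p → ℝ) (mu : Fin q → ℝ)
    (v : Fin p → Fin (p + q) → ℂ) (w : Fin q → Fin (p + q) → ℂ)
    (hA : IsAdmissible p q hp hq A lam mu)
    (hvw : IsPseudoONEigenbasis p q A lam mu v w)
    (k : ℕ) (hk1 : 1 ≤ k) (hk2 : k ≤ p) :
    (∀ x : Fin (p + q) → ℂ, x ∈ Submodule.span ℂ (Set.range v) → x ≠ 0 →
        (∀ i : Fin p, k ≤ (i : ℕ) → pairing p q x (v i) = 0) →
        0 < (pairing p q x x).re ∧ rayleigh p q A x ≤ lam ⟨k - 1, by omega⟩) ∧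
    rayleigh p q A (v ⟨k - 1, by omega⟩) = lam ⟨k - 1, by omega⟩ := by
  obtain ⟨-, -, hAv, -, hvv, -, -, -⟩ := hvw
  obtain ⟨-, hlam, -, -, -⟩ := hA
  exact aux_main p q hp hq A lam hlam v hAv hvv k hk1 hk2
end
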